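/- Let M be a module of a graph G = (V,E). There exists an optimal edge-deletion set F (a minimum set of edges whose removal makes G P_4-free) such that M is a module of the resulting P_4-free graph H = (V, E \ F). -/

import Mathlib

variable {V : Type*}

/-- `{a,b,c,d}` induces a path `a - b - c - d` on four vertices in `G`. -/
def IsInducedP4 (G : SimpleGraph V) (a b c d : V) : Prop :=
  a ≠ b ∧ a ≠ c ∧ a ≠ d ∧ b ≠ c ∧ b ≠ d ∧ c ≠ d ∧
  G.Adj a b ∧ G.Adj b c ∧ G.Adj c d ∧ ¬ G.Adj a c ∧ ¬ G.Adj a d ∧ ¬ G.Adj b d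

/-- `G` has no induced path on four vertices. -/
def P4Free (G : SimpleGraph V) : Prop := ∀ a b c d : V, ¬ IsInducedP4 G a b c d

/-- `M` is a module of `G`: every vertex outside `M` is adjacent to all or none of `M`. -/
def IsModule (G : SimpleGraph V) (M : Set V) : Prop :=
  ∀ x ∉ M, (∀ v ∈ M, G.Adj x v) ∨ (∀ v ∈ M, ¬ G.Adj x v)

/-- `F` is an edge-deletion set of `G`: a set of edges whose removal makes `G` `P₄`-free. -/
def IsDelSet (G : SimpleGraph V) (F : Set (Sym2 V)) : Prop :=
  F ⊆ G.edgeSet ∧ P4Free (G.deleteEdges F)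

/-- `F` is an optimal (minimum-cardinality) edge-deletion set of `G`. -/
def IsOptDelSet (G : SimpleGraph V) (F : Set (Sym2 V)) : Prop :=
  IsDelSet G F ∧ ∀ F' : Set (Sym2 V), IsDelSet G F' → F.ncard ≤ F'.ncard

/-- The graph obtained from `H` by rewiring all edges between `M` and its complement so that
every vertex of `M` copies the outside neighborhood of the representative `m0`. -/
def modGraph (H : SimpleGraph V) (M : Set V) (m0 : V) : SimpleGraph V where
  Adj u v := (u ∈ M ∧ v ∈ M ∧ H.Adj u v) ∨ (u ∈ M ∧ v ∉ M ∧ H.Adj v m0) ∨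
             (u ∉ M ∧ v ∈ M ∧ H.Adj u m0) ∨ (u ∉ M ∧ v ∉ M ∧ H.Adj u v)
  symm := by
    constructor
    intro u v h
    rcases h with ⟨h1,h2,h3⟩|⟨h1,h2,h3⟩|⟨h1,h2,h3⟩|⟨h1,h2,h3⟩
    · exact Or.inl ⟨h2,h1,h3.symm⟩
    · exact Or.inr (Or.inr (Or.inl ⟨h2,h1,h3⟩))
    · exact Or.inr (Or.inl ⟨h2,h1,h3⟩)
    · exact Or.inr (Or.inr (Or.inr ⟨h2,h1,h3.symm⟩))
  loopless := by
    constructor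
    intro u h
    rcases h with ⟨h1,h2,h3⟩|⟨h1,h2,h3⟩|⟨h1,h2,h3⟩|⟨h1,h2,h3⟩ <;>
      first | exact H.irrefl h3 | exact h2 h1 | exact h1 h2

lemma modGraph_adj {H : SimpleGraph V} {M : Set V} {m0 u v : V} :
    (modGraph H M m0).Adj u v ↔
      (u ∈ M ∧ v ∈ M ∧ H.Adj u v) ∨ (u ∈ M ∧ v ∉ M ∧ H.Adj v m0) ∨
      (u ∉ M ∧ v ∈ M ∧ H.Adj u m0) ∨ (u ∉ M ∧ v ∉ M ∧ H.Adj u v) := Iff.rfl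

lemma modGraph_le {G H : SimpleGraph V} {M : Set V} {m0 : V}
    (hGM : IsModule G M) (hle : H ≤ G) (hm0 : m0 ∈ M) : modGraph H M m0 ≤ G := by
  intro u v h
  rcases h with ⟨h1,h2,h3⟩|⟨h1,h2,h3⟩|⟨h1,h2,h3⟩|⟨h1,h2,h3⟩
  · exact hle h3
  · rcases hGM v h2 with hall | hnone
    · exact (hall u h1).symm
    · exact absurd (hle h3) (hnone m0 hm0)
  · rcases hGM u h1 with hall | hnone
    · exact hall v h2
    · exact absurd (hle h3) (hnone m0 hm0)
  · exact hle h3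

lemma modGraph_module {H : SimpleGraph V} {M : Set V} {m0 : V} :
    IsModule (modGraph H M m0) M := by
  intro x hx
  by_cases hxm : H.Adj x m0
  · exact Or.inl fun v hv => Or.inr (Or.inr (Or.inl ⟨hx, hv, hxm⟩))
  · refine Or.inr fun v hv hadj => ?_
    rw [modGraph_adj] at hadj
    simp only [hx, hv] at hadj
    tauto

lemma modGraph_p4free {H : SimpleGraph V} {M : Set V} {m0 : V}
    (hH : P4Free H) (hm0 : m0 ∈ M) : P4Free (modGraph H M m0) := by
  intro a b c d h
  obtain ⟨nab, nac, nad, nbc, nbd, ncd, hab, hbc, hcd, hac, had, hbd⟩ := h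
  by_cases ha : a ∈ M <;> by_cases hb : b ∈ M <;> by_cases hc : c ∈ M <;> by_cases hd : d ∈ M <;>
    simp only [modGraph_adj, ha, hb, hc, hd, not_true, not_false_iff, true_and, false_and,
      and_true, and_false, false_or, or_false, not_false_eq_true] at hab hbc hcd hac had hbd <;>
    first
      | tauto
      | exact hH a b c d ⟨nab,nac,nad,nbc,nbd,ncd,hab,hbc,hcd,hac,had,hbd⟩
      | exact hH m0 b c d ⟨fun h => hb (h ▸ hm0), fun h => hc (h ▸ hm0), fun h => hd (h ▸ hm0),
          nbc, nbd, ncd, hab.symm, hbc, hcd, fun h => hac h.symm, fun h => had h.symm, hbd⟩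
      | exact hH a m0 c d ⟨fun h => ha (h.symm ▸ hm0), nac, nad, fun h => hc (h ▸ hm0),
          fun h => hd (h ▸ hm0), ncd, hab, hbc.symm, hcd, hac, had, fun h => hbd h.symm⟩
      | exact hH a b m0 d ⟨nab, fun h => ha (h.symm ▸ hm0), nad, fun h => hb (h.symm ▸ hm0),
          nbd, fun h => hd (h ▸ hm0), hab, hbc, hcd.symm, hac, had, hbd⟩
      | exact hH a b c m0 ⟨nab, nac, fun h => ha (h.symm ▸ hm0), nbc, fun h => hb (h.symm ▸ hm0),
          fun h => hc (h.symm ▸ hm0), hab, hbc, hcd, hac, had, hbd⟩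

lemma modGraph_card_le [Finite V] {H : SimpleGraph V} {M : Set V} {m0 : V}
    (hmax : ∀ v ∈ M, {x | x ∉ M ∧ H.Adj x v}.ncard ≤ {x | x ∉ M ∧ H.Adj x m0}.ncard) :
    H.edgeSet.ncard ≤ (modGraph H M m0).edgeSet.ncard := by
  classical
  set H' := modGraph H M m0 with hH'
  set P : SimpleGraph V → Set (V × V) :=
    fun K => {q | q.1 ∉ M ∧ q.2 ∈ M ∧ K.Adj q.1 q.2} with hP
  set Sin : Set (Sym2 V) := {e | ∀ x ∈ e, x ∈ M} with hSin
  set Sout : Set (Sym2 V) := {e | ∀ x ∈ e, x ∉ M} with hSout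
  set Scr : Set (Sym2 V) := {e | ∃ q : V × V, q.1 ∉ M ∧ q.2 ∈ M ∧ e = s(q.1, q.2)} with hScr
  have hcover : ∀ K : SimpleGraph V,
      K.edgeSet = (K.edgeSet ∩ Sin) ∪ (K.edgeSet ∩ Sout) ∪ (K.edgeSet ∩ Scr) := by
    intro K
    ext e
    induction e using Sym2.ind with
    | _ u v =>
      simp only [Set.mem_union, Set.mem_inter_iff]
      constructor
      · intro he
        by_cases hu : u ∈ M <;> by_cases hv : v ∈ M
        · refine Or.inl (Or.inl ⟨he, ?_⟩)
          intro x hx; rcases Sym2.mem_iff.mp hx with rfl | rfl <;> assumption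
        · exact Or.inr ⟨he, ⟨(v, u), hv, hu, Sym2.eq_swap⟩⟩
        · exact Or.inr ⟨he, ⟨(u, v), hu, hv, rfl⟩⟩
        · refine Or.inl (Or.inr ⟨he, ?_⟩)
          intro x hx; rcases Sym2.mem_iff.mp hx with rfl | rfl <;> assumption
      · rintro ((⟨he, -⟩ | ⟨he, -⟩) | ⟨he, -⟩) <;> exact he
  have hdisj1 : ∀ K : SimpleGraph V, Disjoint (K.edgeSet ∩ Sin) (K.edgeSet ∩ Sout) := by
    intro K
    rw [Set.disjoint_left]
    rintro e ⟨-, h1⟩ ⟨-, h2⟩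
    induction e using Sym2.ind with
    | _ u v => exact h2 u (Sym2.mem_mk_left u v) (h1 u (Sym2.mem_mk_left u v))
  have hdisj2 : ∀ K : SimpleGraph V,
      Disjoint ((K.edgeSet ∩ Sin) ∪ (K.edgeSet ∩ Sout)) (K.edgeSet ∩ Scr) := by
    intro K
    rw [Set.disjoint_left]
    rintro e (⟨-, h1⟩ | ⟨-, h1⟩) ⟨-, ⟨q, hq1, hq2, rfl⟩⟩
    · exact hq1 (h1 q.1 (Sym2.mem_mk_left _ _))
    · exact h1 q.2 (Sym2.mem_mk_right _ _) hq2
  have hcount : ∀ K : SimpleGraph V, K.edgeSet.ncard =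
      (K.edgeSet ∩ Sin).ncard + (K.edgeSet ∩ Sout).ncard + (K.edgeSet ∩ Scr).ncard := by
    intro K
    conv_lhs => rw [hcover K]
    rw [Set.ncard_union_eq (hdisj2 K) (Set.toFinite _) (Set.toFinite _),
        Set.ncard_union_eq (hdisj1 K) (Set.toFinite _) (Set.toFinite _)]
  have hin : H.edgeSet ∩ Sin = H'.edgeSet ∩ Sin := by
    ext e
    induction e using Sym2.ind with
    | _ u v =>
      simp only [Set.mem_inter_iff, SimpleGraph.mem_edgeSet]
      constructor
      · rintro ⟨ha, hs⟩
        have hu : u ∈ M := hs u (Sym2.mem_mk_left _ _)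
        have hv : v ∈ M := hs v (Sym2.mem_mk_right _ _)
        exact ⟨Or.inl ⟨hu, hv, ha⟩, hs⟩
      · rintro ⟨ha, hs⟩
        have hu : u ∈ M := hs u (Sym2.mem_mk_left _ _)
        have hv : v ∈ M := hs v (Sym2.mem_mk_right _ _)
        rcases modGraph_adj.mp ha with ⟨-,-,h⟩|⟨-,h2,-⟩|⟨h1,-,-⟩|⟨h1,-,-⟩
        · exact ⟨h, hs⟩
        · exact absurd hv h2
        · exact absurd hu h1
        · exact absurd hu h1
  have hout : H.edgeSet ∩ Sout = H'.edgeSet ∩ Sout := by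
    ext e
    induction e using Sym2.ind with
    | _ u v =>
      simp only [Set.mem_inter_iff, SimpleGraph.mem_edgeSet]
      constructor
      · rintro ⟨ha, hs⟩
        have hu : u ∉ M := hs u (Sym2.mem_mk_left _ _)
        have hv : v ∉ M := hs v (Sym2.mem_mk_right _ _)
        exact ⟨Or.inr (Or.inr (Or.inr ⟨hu, hv, ha⟩)), hs⟩
      · rintro ⟨ha, hs⟩
        have hu : u ∉ M := hs u (Sym2.mem_mk_left _ _)
        have hv : v ∉ M := hs v (Sym2.mem_mk_right _ _)
        rcases modGraph_adj.mp ha with ⟨h1,-,-⟩|⟨h1,-,-⟩|⟨-,h2,-⟩|⟨-,-,h⟩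
        · exact absurd h1 hu
        · exact absurd h1 hu
        · exact absurd h2 hv
        · exact ⟨h, hs⟩
  have himg : ∀ K : SimpleGraph V,
      K.edgeSet ∩ Scr = (fun q : V × V => s(q.1, q.2)) '' (P K) := by
    intro K
    ext e
    constructor
    · rintro ⟨he, q, hq1, hq2, rfl⟩
      exact ⟨q, ⟨hq1, hq2, (K.mem_edgeSet).mp he⟩, rfl⟩
    · rintro ⟨q, ⟨hq1, hq2, hadj⟩, rfl⟩
      exact ⟨(K.mem_edgeSet).mpr hadj, q, hq1, hq2, rfl⟩
  have hinjOn : ∀ K : SimpleGraph V, Set.InjOn (fun q : V × V => s(q.1, q.2)) (P K) := by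
    intro K q hq r hr h
    simp only at h
    rcases Sym2.eq_iff.mp h with ⟨h1, h2⟩ | ⟨h1, h2⟩
    · exact Prod.ext h1 h2
    · exact absurd (h1.symm ▸ hr.2.1) hq.1
  have hcr : (H.edgeSet ∩ Scr).ncard ≤ (H'.edgeSet ∩ Scr).ncard := by
    rw [himg H, himg H', Set.ncard_image_of_injOn (hinjOn H),
        Set.ncard_image_of_injOn (hinjOn H')]
    have key : ∀ v, v ∈ M → ∃ f : ↥({x | x ∉ M ∧ H.Adj x v}) → ↥({x | x ∉ M ∧ H.Adj x m0}),
        Function.Injective f := by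
      intro v hv
      have h1 : Nat.card ↥({x | x ∉ M ∧ H.Adj x v}) ≤ Nat.card ↥({x | x ∉ M ∧ H.Adj x m0}) := by
        rw [Nat.card_coe_set_eq, Nat.card_coe_set_eq]; exact hmax v hv
      have i1 := Fintype.ofFinite ↥({x | x ∉ M ∧ H.Adj x v})
      have i2 := Fintype.ofFinite ↥({x | x ∉ M ∧ H.Adj x m0})
      rw [Nat.card_eq_fintype_card, Nat.card_eq_fintype_card] at h1
      obtain ⟨f⟩ := Function.Embedding.nonempty_of_card_le h1
      exact ⟨f, f.injective⟩
    choose g hg using key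
    have hmem : ∀ (y : ↥({x | x ∉ M ∧ H.Adj x m0})) (v : V), v ∈ M → ((y : V), v) ∈ P H' := by
      intro y v hv
      exact ⟨y.2.1, hv, Or.inr (Or.inr (Or.inl ⟨y.2.1, hv, y.2.2⟩))⟩
    rw [← Nat.card_coe_set_eq, ← Nat.card_coe_set_eq]
    refine Nat.card_le_card_of_injective
      (fun p : ↥(P H) => (⟨((g p.1.2 p.2.2.1 ⟨p.1.1, p.2.1, p.2.2.2⟩ : V), p.1.2),
        hmem _ _ p.2.2.1⟩ : ↥(P H'))) ?_
    rintro ⟨⟨x, v⟩, hx, hv, hxv⟩ ⟨⟨y, w⟩, hy, hw, hyw⟩ heq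
    simp only [Subtype.mk.injEq, Prod.mk.injEq] at heq
    obtain ⟨h1, h2⟩ := heq
    subst h2
    have h3 := hg v hv (Subtype.ext h1)
    simp only [Subtype.mk.injEq] at h3
    subst h3
    rfl
  rw [hcount H, hcount H', hin, hout]
  exact Nat.add_le_add le_rfl hcr

theorem stmt3 [Finite V] (G : SimpleGraph V) (M : Set V) (hM : IsModule G M) :
    ∃ F : Set (Sym2 V), IsOptDelSet G F ∧ IsModule (G.deleteEdges F) M := by
  classical
  -- existence of an optimal deletion set
  have hSne : {n | ∃ F, IsDelSet G F ∧ F.ncard = n}.Nonempty := by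
    refine ⟨G.edgeSet.ncard, G.edgeSet, ⟨subset_rfl, ?_⟩, rfl⟩
    intro a b c d h
    have hadj := h.2.2.2.2.2.2.1
    rw [SimpleGraph.deleteEdges_adj] at hadj
    exact hadj.2 ((G.mem_edgeSet).mpr hadj.1)
  obtain ⟨F, hF, hFcard⟩ := Nat.sInf_mem hSne
  have hFopt : ∀ F', IsDelSet G F' → F.ncard ≤ F'.ncard := by
    intro F' h
    rw [hFcard]
    exact Nat.sInf_le ⟨F', h, rfl⟩
  rcases M.eq_empty_or_nonempty with rfl | ⟨m1, hm1⟩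
  · exact ⟨F, ⟨hF, hFopt⟩, fun x _ => Or.inl fun v hv => absurd hv (Set.notMem_empty v)⟩
  · set H := G.deleteEdges F with hH
    obtain ⟨m0, hm0M, hmax⟩ :=
      Set.exists_max_image M (fun v => {x | x ∉ M ∧ H.Adj x v}.ncard) M.toFinite ⟨m1, hm1⟩
    set H' := modGraph H M m0 with hH'def
    have hHle : H ≤ G := SimpleGraph.deleteEdges_le F
    have hH'le : H' ≤ G := modGraph_le hM hHle hm0M
    set F' := G.edgeSet \ H'.edgeSet with hF'def
    have hdel : G.deleteEdges F' = H' := by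
      ext u v
      rw [SimpleGraph.deleteEdges_adj]
      constructor
      · rintro ⟨h1, h2⟩
        by_contra h3
        exact h2 ⟨(G.mem_edgeSet).mpr h1, fun hc => h3 ((H'.mem_edgeSet).mp hc)⟩
      · intro h
        exact ⟨hH'le h, fun hc => hc.2 ((H'.mem_edgeSet).mpr h)⟩
    have hP4' : P4Free H' := modGraph_p4free hF.2 hm0M
    have hdelset' : IsDelSet G F' := by
      refine ⟨Set.diff_subset, ?_⟩
      rw [hdel]
      exact hP4'
    have hcard : H.edgeSet.ncard ≤ H'.edgeSet.ncard := modGraph_card_le hmax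
    have hF'le : F'.ncard ≤ F.ncard := by
      have hFeq : F = G.edgeSet \ H.edgeSet := by
        rw [hH, SimpleGraph.edgeSet_deleteEdges, Set.diff_diff_cancel_left hF.1]
      rw [hFeq, hF'def, Set.ncard_diff (SimpleGraph.edgeSet_mono hH'le) (Set.toFinite _),
        Set.ncard_diff (SimpleGraph.edgeSet_mono hHle) (Set.toFinite _)]
      exact Nat.sub_le_sub_left hcard _
    refine ⟨F', ⟨hdelset', fun F'' h => le_trans hF'le (hFopt F'' h)⟩, ?_⟩
    rw [hdel]
    exact modGraph_module
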